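/- arXiv:1406.1949 — 4 statements merged into one kernel-verified Lean document; each statement's English description precedes it below -/
import Mathlib

section
/- Let P be a finite set of n ≥ 3 points in ℝ² such that no three points of P are collinear. Then there exists a point p ∈ P such that the number of distinct distances from p to the other points of P is at least ⌈(n-1)/3⌉. -/
open scoped Classical
open AffineSubspace Module

lemma collinear_perpBisector (q r : EuclideanSpace ℝ (Fin 2)) (h : q ≠ r) :
    Collinear ℝ ((perpBisector q r : Set (EuclideanSpace ℝ (Fin 2)))) := by
  rw [collinear_iff_rank_le_one, ← direction_eq_vectorSpan, direction_perpBisector]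
  have hv : (r - q : EuclideanSpace ℝ (Fin 2)) ≠ 0 := sub_ne_zero.mpr (Ne.symm h)
  have h1 : finrank ℝ (ℝ ∙ (r - q : EuclideanSpace ℝ (Fin 2))) = 1 := finrank_span_singleton hv
  have h2 : finrank ℝ ((ℝ ∙ (r - q : EuclideanSpace ℝ (Fin 2)))ᗮ) ≤ 1 := by
    have := Submodule.finrank_add_finrank_orthogonal
      (K := (ℝ ∙ (r - q : EuclideanSpace ℝ (Fin 2))))
    have hd : finrank ℝ (EuclideanSpace ℝ (Fin 2)) = 2 := finrank_euclideanSpace_fin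
    omega
  calc Module.rank ℝ ((ℝ ∙ ((r : EuclideanSpace ℝ (Fin 2)) -ᵥ q))ᗮ)
      = finrank ℝ ((ℝ ∙ (r - q : EuclideanSpace ℝ (Fin 2)))ᗮ) := by rw [finrank_eq_rank]; rfl
    _ ≤ 1 := by exact_mod_cast h2

theorem szemeredi_no_three_collinear (n : ℕ) (hn : 3 ≤ n)
    (P : Finset (EuclideanSpace ℝ (Fin 2))) (hP : P.card = n)
    (h3 : ∀ a ∈ P, ∀ b ∈ P, ∀ c ∈ P, a ≠ b → a ≠ c → b ≠ c →
      ¬ Collinear ℝ ({a, b, c} : Set (EuclideanSpace ℝ (Fin 2)))) :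
    ∃ p ∈ P, (n - 1 + 2) / 3 ≤ ((P.erase p).image (fun q => dist p q)).card := by
  classical
  by_contra hcon
  push_neg at hcon
  set N : ℕ := ∑ p ∈ P, (P.offDiag.filter fun z => dist p z.1 = dist p z.2).card with hN
  -- upper bound
  have hbis : ∀ z ∈ P.offDiag, (P.filter fun p => dist p z.1 = dist p z.2).card ≤ 2 := by
    rintro ⟨q, r⟩ hz
    rw [Finset.mem_offDiag] at hz
    obtain ⟨hq, hr, hqr⟩ := hz
    by_contra hgt
    push_neg at hgt
    obtain ⟨a, b, c, ha, hb, hc, hab, hac, hbc⟩ := Finset.two_lt_card_iff.mp hgt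
    simp only [Finset.mem_filter] at ha hb hc
    refine h3 a ha.1 b hb.1 c hc.1 hab hac hbc ?_
    refine (collinear_perpBisector q r hqr).subset ?_
    intro x hx
    simp only [Set.mem_insert_iff, Set.mem_singleton_iff] at hx
    rcases hx with rfl | rfl | rfl <;>
      simp only [SetLike.mem_coe, mem_perpBisector_iff_dist_eq] <;>
      [exact ha.2; exact hb.2; exact hc.2]
  have hupper : N ≤ 2 * (n * n - n) := by
    have hswap : N = ∑ z ∈ P.offDiag, (P.filter fun p => dist p z.1 = dist p z.2).card := by
      simp only [hN, Finset.card_filter]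
      exact Finset.sum_comm
    calc N ≤ ∑ _z ∈ P.offDiag, 2 := by
          rw [hswap]; exact Finset.sum_le_sum hbis
      _ = 2 * (n * n - n) := by
          rw [Finset.sum_const, smul_eq_mul, Finset.offDiag_card, hP, mul_comm]
  -- lower bound
  have hlow : ∀ p ∈ P, 2 * (n - 1) + 1 ≤
      (P.offDiag.filter fun z => dist p z.1 = dist p z.2).card := by
    intro p hp
    set Q := P.erase p with hQ
    have hk : Q.card = n - 1 := by rw [hQ, Finset.card_erase_of_mem hp, hP]
    set f : EuclideanSpace ℝ (Fin 2) → ℝ := fun q => dist p q with hf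
    set I := Q.image f with hI
    set t := I.card with ht
    have ht3 : 3 * t + 1 ≤ n - 1 := by
      have hce : (Finset.image (fun q => dist p q) (P.erase p)).card = t := rfl
      have := hcon p hp
      omega
    set m : ℝ → ℕ := fun d => (Q.filter fun q => f q = d).card with hm
    have hsum : ∑ d ∈ I, m d = n - 1 := by
      rw [← hk]
      exact (Finset.card_eq_sum_card_fiberwise (fun x hx => Finset.mem_image_of_mem f hx)).symm
    -- the fiber decomposition
    have hdecomp : (Q.offDiag.filter fun z => dist p z.1 = dist p z.2) =
        I.biUnion fun d => ((Q.filter fun q => f q = d)).offDiag := by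
      ext z
      simp only [Finset.mem_filter, Finset.mem_offDiag, Finset.mem_biUnion, Finset.mem_image]
      constructor
      · rintro ⟨⟨h1, h2, h3'⟩, h4⟩
        refine ⟨f z.1, Finset.mem_image_of_mem f h1, ⟨h1, rfl⟩, ⟨h2, ?_⟩, h3'⟩
        show dist p z.2 = dist p z.1
        exact h4.symm
      · rintro ⟨d, -, ⟨h1, e1⟩, ⟨h2, e2⟩, h3'⟩
        refine ⟨⟨h1, h2, h3'⟩, ?_⟩
        show f z.1 = f z.2
        rw [e1, e2]
    have hdisj : ∀ d₁ ∈ I, ∀ d₂ ∈ I, d₁ ≠ d₂ →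
        Disjoint ((Q.filter fun q => f q = d₁)).offDiag ((Q.filter fun q => f q = d₂)).offDiag := by
      intro d₁ _ d₂ _ hne
      rw [Finset.disjoint_left]
      intro z hz1 hz2
      rw [Finset.mem_offDiag] at hz1 hz2
      exact hne ((Finset.mem_filter.mp hz1.1).2.symm.trans (Finset.mem_filter.mp hz2.1).2)
    have hcard : (Q.offDiag.filter fun z => dist p z.1 = dist p z.2).card + (n - 1) =
        ∑ d ∈ I, m d * m d := by
      rw [hdecomp, Finset.card_biUnion hdisj, ← hsum, ← Finset.sum_add_distrib]
      refine Finset.sum_congr rfl fun d hd => ?_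
      rw [Finset.offDiag_card]
      have hmd : (Finset.filter (fun q => f q = d) Q).card = m d := rfl
      rw [hmd]
      have hm1 : 1 ≤ m d := by
        obtain ⟨q, hq, rfl⟩ := Finset.mem_image.mp hd
        exact Finset.card_pos.mpr ⟨q, Finset.mem_filter.mpr ⟨hq, rfl⟩⟩
      have : m d ≤ m d * m d := Nat.le_mul_of_pos_left _ hm1
      omega
    -- Cauchy–Schwarz
    have hcs : (n - 1) * (n - 1) ≤ t * ∑ d ∈ I, m d * m d := by
      have hr := sq_sum_le_card_mul_sum_sq (s := I) (f := fun d => ((m d : ℝ)))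
      have hL : ∑ d ∈ I, (m d : ℝ) = ((n - 1 : ℕ) : ℝ) := by
        rw [← hsum]; push_cast; rfl
      rw [hL] at hr
      simp_rw [pow_two] at hr
      exact_mod_cast hr
    -- conclude
    set S := (Q.offDiag.filter fun z => dist p z.1 = dist p z.2).card with hS
    have hsub : (Q.offDiag.filter fun z => dist p z.1 = dist p z.2) ⊆
        (P.offDiag.filter fun z => dist p z.1 = dist p z.2) := by
      refine Finset.filter_subset_filter _ ?_
      intro z hz
      rw [Finset.mem_offDiag] at hz ⊢
      exact ⟨Finset.mem_of_mem_erase hz.1, Finset.mem_of_mem_erase hz.2.1, hz.2.2⟩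
    have hmain : 2 * (n - 1) + 1 ≤ S := by
      by_contra hle
      push_neg at hle
      have h1 : (n - 1) * (n - 1) ≤ t * (S + (n - 1)) := by rw [hS, hcard]; exact hcs
      have hk2 : 2 ≤ n - 1 := by omega
      nlinarith [h1, Nat.le_of_lt_succ hle, ht3, hk2,
        Nat.mul_le_mul_right (n - 1) ht3]
    exact hmain.trans (Finset.card_le_card hsub)
  have hNlow : n * (2 * (n - 1) + 1) ≤ N := by
    calc n * (2 * (n - 1) + 1) = ∑ _p ∈ P, (2 * (n - 1) + 1) := by
          rw [Finset.sum_const, smul_eq_mul, hP]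
      _ ≤ N := Finset.sum_le_sum hlow
  have hfin : n * (2 * (n - 1) + 1) ≤ 2 * (n * n - n) := hNlow.trans hupper
  obtain ⟨k, rfl⟩ : ∃ k, n = k + 1 := ⟨n - 1, by omega⟩
  simp only [Nat.add_sub_cancel] at hfin
  have hq : (k + 1) * (k + 1) - (k + 1) = (k + 1) * k := by
    have h := Nat.mul_succ (k + 1) k
    rw [Nat.succ_eq_add_one] at h
    omega
  rw [hq] at hfin
  nlinarith [hfin, hn]
end

section
/- Let P be a finite set of n points in ℝ², and suppose: (1) the number of ordered quadruples (a,b,c,d) ∈ P⁴ of four distinct points with dist a b = dist c d > 0 is at most Q₁, and (2) the number of ordered triples (a,b,c) ∈ P³ of three distinct points with dist a b = dist a c (isosceles triples) is at most Q₂. Then for every p ∈ (0,1), there exists a subset P'' ⊆ P spanning every nonzero distance at most once with |P''| ≥ pn − p⁴Q₁ − p³Q₂. -/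
open scoped Classical

noncomputable section CharAux

abbrev EPt := EuclideanSpace ℝ (Fin 2)

def quadF (S : Finset EPt) : Finset (EPt × EPt × EPt × EPt) :=
  (S ×ˢ S ×ˢ S ×ˢ S).filter fun t =>
    t.1 ≠ t.2.1 ∧ t.1 ≠ t.2.2.1 ∧ t.1 ≠ t.2.2.2 ∧ t.2.1 ≠ t.2.2.1 ∧
    t.2.1 ≠ t.2.2.2 ∧ t.2.2.1 ≠ t.2.2.2 ∧
    dist t.1 t.2.1 = dist t.2.2.1 t.2.2.2 ∧ 0 < dist t.1 t.2.1

def triF (S : Finset EPt) : Finset (EPt × EPt × EPt) :=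
  (S ×ˢ S ×ˢ S).filter fun t =>
    t.1 ≠ t.2.1 ∧ t.1 ≠ t.2.2 ∧ t.2.1 ≠ t.2.2 ∧
    dist t.1 t.2.1 = dist t.1 t.2.2

lemma mem_quadF {S : Finset EPt} {u : EPt × EPt × EPt × EPt} :
    u ∈ quadF S ↔ (u.1 ∈ S ∧ u.2.1 ∈ S ∧ u.2.2.1 ∈ S ∧ u.2.2.2 ∈ S) ∧
      (u.1 ≠ u.2.1 ∧ u.1 ≠ u.2.2.1 ∧ u.1 ≠ u.2.2.2 ∧ u.2.1 ≠ u.2.2.1 ∧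
       u.2.1 ≠ u.2.2.2 ∧ u.2.2.1 ≠ u.2.2.2 ∧
       dist u.1 u.2.1 = dist u.2.2.1 u.2.2.2 ∧ 0 < dist u.1 u.2.1) := by
  simp [quadF, Finset.mem_product, and_assoc]

lemma mem_triF {S : Finset EPt} {u : EPt × EPt × EPt} :
    u ∈ triF S ↔ (u.1 ∈ S ∧ u.2.1 ∈ S ∧ u.2.2 ∈ S) ∧
      (u.1 ≠ u.2.1 ∧ u.1 ≠ u.2.2 ∧ u.2.1 ≠ u.2.2 ∧
       dist u.1 u.2.1 = dist u.1 u.2.2) := by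
  simp [triF, Finset.mem_product, and_assoc]

lemma quad_mono {S' S : Finset EPt} (h : S' ⊆ S) : quadF S' ⊆ quadF S :=
  Finset.filter_subset_filter _
    (Finset.product_subset_product h (Finset.product_subset_product h
      (Finset.product_subset_product h h)))

lemma tri_mono {S' S : Finset EPt} (h : S' ⊆ S) : triF S' ⊆ triF S :=
  Finset.filter_subset_filter _
    (Finset.product_subset_product h (Finset.product_subset_product h h))

lemma quad_lt {S : Finset EPt} {x : EPt} (u : EPt × EPt × EPt × EPt)
    (hu : u ∈ quadF S)
    (hx : u.1 = x ∨ u.2.1 = x ∨ u.2.2.1 = x ∨ u.2.2.2 = x) :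
    (quadF (S.erase x)).card < (quadF S).card := by
  apply Finset.card_lt_card
  refine ⟨quad_mono (Finset.erase_subset _ _), fun hsub => ?_⟩
  have h2 := (mem_quadF.mp (hsub hu)).1
  rcases hx with h | h | h | h <;> rw [h] at h2 <;>
    first
    | exact Finset.notMem_erase x S h2.1
    | exact Finset.notMem_erase x S h2.2.1
    | exact Finset.notMem_erase x S h2.2.2.1
    | exact Finset.notMem_erase x S h2.2.2.2

lemma tri_lt {S : Finset EPt} {x : EPt} (u : EPt × EPt × EPt)
    (hu : u ∈ triF S)
    (hx : u.1 = x ∨ u.2.1 = x ∨ u.2.2 = x) :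
    (triF (S.erase x)).card < (triF S).card := by
  apply Finset.card_lt_card
  refine ⟨tri_mono (Finset.erase_subset _ _), fun hsub => ?_⟩
  have h2 := (mem_triF.mp (hsub hu)).1
  rcases hx with h | h | h <;> rw [h] at h2 <;>
    first
    | exact Finset.notMem_erase x S h2.1
    | exact Finset.notMem_erase x S h2.2.1
    | exact Finset.notMem_erase x S h2.2.2

def Good (S : Finset EPt) : Prop :=
  ∀ a ∈ S, ∀ b ∈ S, ∀ c ∈ S, ∀ e ∈ S, a ≠ b → c ≠ e →
    dist a b = dist c e → ({a, b} : Finset EPt) = {c, e}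

lemma deletion (S : Finset EPt) :
    ∃ T, T ⊆ S ∧ Good T ∧ S.card ≤ T.card + (quadF S).card + (triF S).card := by
  induction S using Finset.strongInduction with
  | _ S ih =>
  by_cases hg : Good S
  · exact ⟨S, subset_rfl, hg, by omega⟩
  · rw [Good] at hg; push_neg at hg
    obtain ⟨a, ha, b, hb, c, hc, e, he, hab, hce, hd, hne⟩ := hg
    have main : ∃ x ∈ S, (quadF (S.erase x)).card + (triF (S.erase x)).card + 1
        ≤ (quadF S).card + (triF S).card := by
      by_cases hac : a = c
      · -- triple (a, b, e), erase a
        have hbe : b ≠ e := by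
          intro h; apply hne; rw [hac, h]
        have hae : a ≠ e := hac ▸ hce
        have hmem : ((a, b, e) : EPt × EPt × EPt) ∈ triF S :=
          mem_triF.mpr ⟨⟨ha, hb, he⟩, hab, hae, hbe, by rw [hd, hac]⟩
        have h1 := tri_lt (x := a) _ hmem (Or.inl rfl)
        have h2 := Finset.card_le_card (quad_mono (Finset.erase_subset a S))
        exact ⟨a, ha, by omega⟩
      · by_cases hae : a = e
        · -- triple (a, b, c), erase a
          have hbc : b ≠ c := by
            intro h; apply hne; rw [h, hae, Finset.pair_comm]
          have hmem : ((a, b, c) : EPt × EPt × EPt) ∈ triF S :=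
            mem_triF.mpr ⟨⟨ha, hb, hc⟩, hab, hac, hbc, by
              rw [hd, hae, dist_comm]⟩
          have h1 := tri_lt (x := a) _ hmem (Or.inl rfl)
          have h2 := Finset.card_le_card (quad_mono (Finset.erase_subset a S))
          exact ⟨a, ha, by omega⟩
        · by_cases hbc : b = c
          · -- triple (b, a, e), erase b
            have hbe : b ≠ e := hbc ▸ hce
            have hmem : ((b, a, e) : EPt × EPt × EPt) ∈ triF S :=
              mem_triF.mpr ⟨⟨hb, ha, he⟩, hab.symm, hbe, hae, by
                rw [dist_comm, hd, hbc]⟩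
            have h1 := tri_lt (x := b) _ hmem (Or.inl rfl)
            have h2 := Finset.card_le_card (quad_mono (Finset.erase_subset b S))
            exact ⟨b, hb, by omega⟩
          · by_cases hbe : b = e
            · -- triple (b, a, c), erase b
              have hbc' : b ≠ c := fun h => hce (h ▸ hbe)
              have hmem : ((b, a, c) : EPt × EPt × EPt) ∈ triF S :=
                mem_triF.mpr ⟨⟨hb, ha, hc⟩, hab.symm, hbc', hac, by
                  rw [dist_comm, hd, hbe, dist_comm]⟩
              have h1 := tri_lt (x := b) _ hmem (Or.inl rfl)
              have h2 := Finset.card_le_card (quad_mono (Finset.erase_subset b S))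
              exact ⟨b, hb, by omega⟩
            · -- quadruple (a, b, c, e), erase a
              have hmem : ((a, b, c, e) : EPt × EPt × EPt × EPt) ∈ quadF S :=
                mem_quadF.mpr ⟨⟨ha, hb, hc, he⟩, hab, hac, hae, hbc, hbe, hce, hd,
                  dist_pos.mpr hab⟩
              have h1 := quad_lt (x := a) _ hmem (Or.inl rfl)
              have h2 := Finset.card_le_card (tri_mono (Finset.erase_subset a S))
              exact ⟨a, ha, by omega⟩
    obtain ⟨x, hx, hlt⟩ := main
    obtain ⟨T, hT1, hT2, hT3⟩ := ih (S.erase x) (Finset.erase_ssubset hx)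
    refine ⟨T, hT1.trans (Finset.erase_subset _ _), hT2, ?_⟩
    have hc1 : (S.erase x).card = S.card - 1 := Finset.card_erase_of_mem hx
    have hc2 : 1 ≤ S.card := Finset.card_pos.mpr ⟨x, hx⟩
    omega

section Prob

variable {α : Type*} [DecidableEq α]

lemma sumw (p : ℝ) (s : Finset α) :
    ∑ t ∈ s.powerset, p ^ t.card * (1 - p) ^ (s.card - t.card) = 1 := by
  have h1 : ∏ _i ∈ s, (p + (1 - p)) = 1 := by simp
  rw [Finset.prod_add] at h1
  calc ∑ t ∈ s.powerset, p ^ t.card * (1 - p) ^ (s.card - t.card)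
      = ∑ t ∈ s.powerset, (∏ _i ∈ t, p) * ∏ _i ∈ s \ t, (1 - p) := by
        refine Finset.sum_congr rfl fun t ht => ?_
        rw [Finset.prod_const, Finset.prod_const,
          Finset.card_sdiff_of_subset (Finset.mem_powerset.mp ht)]
    _ = 1 := h1

lemma margin (p : ℝ) (s T : Finset α) (hT : T ⊆ s) :
    ∑ S ∈ s.powerset.filter (fun S => T ⊆ S),
      p ^ S.card * (1 - p) ^ (s.card - S.card) = p ^ T.card := by
  have key : ∑ S ∈ s.powerset.filter (fun S => T ⊆ S),
      p ^ S.card * (1 - p) ^ (s.card - S.card)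
      = ∑ U ∈ (s \ T).powerset,
        p ^ T.card * (p ^ U.card * (1 - p) ^ ((s \ T).card - U.card)) := by
    refine Finset.sum_nbij' (fun S => S \ T) (fun U => U ∪ T) ?_ ?_ ?_ ?_ ?_
    · intro S hS
      rw [Finset.mem_filter, Finset.mem_powerset] at hS
      rw [Finset.mem_powerset]
      exact Finset.sdiff_subset_sdiff hS.1 subset_rfl
    · intro U hU
      rw [Finset.mem_powerset] at hU
      rw [Finset.mem_filter, Finset.mem_powerset]
      exact ⟨Finset.union_subset (hU.trans (Finset.sdiff_subset)) hT,
        Finset.subset_union_right⟩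
    · intro S hS
      rw [Finset.mem_filter] at hS
      exact Finset.sdiff_union_of_subset hS.2
    · intro U hU
      rw [Finset.mem_powerset] at hU
      have hdisj : Disjoint U T := Finset.disjoint_left.mpr fun x hx =>
        (Finset.mem_sdiff.mp (hU hx)).2
      show (U ∪ T) \ T = U
      rw [Finset.union_sdiff_right, Finset.sdiff_eq_self_of_disjoint hdisj]
    · intro S hS
      rw [Finset.mem_filter, Finset.mem_powerset] at hS
      have hc : (S \ T).card + T.card = S.card :=
        Finset.card_sdiff_add_card_eq_card hS.2
      have hc2 : (s \ T).card + T.card = s.card :=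
        Finset.card_sdiff_add_card_eq_card hT
      have hc3 : (S \ T).card ≤ (s \ T).card :=
        Finset.card_le_card (Finset.sdiff_subset_sdiff hS.1 subset_rfl)
      have hc4 : S.card ≤ s.card := Finset.card_le_card hS.1
      show p ^ S.card * (1 - p) ^ (s.card - S.card)
          = p ^ T.card * (p ^ (S \ T).card * (1 - p) ^ ((s \ T).card - (S \ T).card))
      rw [← mul_assoc, ← pow_add]
      have e1 : T.card + (S \ T).card = S.card := by omega
      have e2 : (s \ T).card - (S \ T).card = s.card - S.card := by omega
      rw [e1, e2]
  rw [key, ← Finset.mul_sum, sumw, mul_one]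

lemma exp_count (p : ℝ) (s : Finset α) {ι : Type*} (I : Finset ι) (g : ι → Finset α)
    (hg : ∀ i ∈ I, g i ⊆ s) :
    ∑ S ∈ s.powerset, (p ^ S.card * (1 - p) ^ (s.card - S.card)) *
      ((I.filter fun i => g i ⊆ S).card : ℝ)
      = ∑ i ∈ I, p ^ (g i).card := by
  have step1 : ∀ S ∈ s.powerset,
      (p ^ S.card * (1 - p) ^ (s.card - S.card)) *
        ((I.filter fun i => g i ⊆ S).card : ℝ)
      = ∑ i ∈ I, (if g i ⊆ S then p ^ S.card * (1 - p) ^ (s.card - S.card) else 0) := by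
    intro S _
    rw [Finset.card_filter, Nat.cast_sum, Finset.mul_sum]
    refine Finset.sum_congr rfl fun i _ => ?_
    split <;> simp
  rw [Finset.sum_congr rfl step1, Finset.sum_comm]
  refine Finset.sum_congr rfl fun i hi => ?_
  rw [← Finset.sum_filter]
  exact margin p s (g i) (hg i hi)

end Prob

lemma quad_restrict {S P : Finset EPt} (hS : S ⊆ P) :
    (quadF P).filter
      (fun u => ({u.1, u.2.1, u.2.2.1, u.2.2.2} : Finset EPt) ⊆ S) = quadF S := by
  ext u
  simp only [Finset.mem_filter, mem_quadF, Finset.insert_subset_iff,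
    Finset.singleton_subset_iff]
  constructor
  · rintro ⟨⟨_, hpred⟩, h1, h2, h3, h4⟩
    exact ⟨⟨h1, h2, h3, h4⟩, hpred⟩
  · rintro ⟨⟨h1, h2, h3, h4⟩, hpred⟩
    exact ⟨⟨⟨hS h1, hS h2, hS h3, hS h4⟩, hpred⟩, h1, h2, h3, h4⟩

lemma tri_restrict {S P : Finset EPt} (hS : S ⊆ P) :
    (triF P).filter
      (fun u => ({u.1, u.2.1, u.2.2} : Finset EPt) ⊆ S) = triF S := by
  ext u
  simp only [Finset.mem_filter, mem_triF, Finset.insert_subset_iff,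
    Finset.singleton_subset_iff]
  constructor
  · rintro ⟨⟨_, hpred⟩, h1, h2, h3⟩
    exact ⟨⟨h1, h2, h3⟩, hpred⟩
  · rintro ⟨⟨h1, h2, h3⟩, hpred⟩
    exact ⟨⟨⟨hS h1, hS h2, hS h3⟩, hpred⟩, h1, h2, h3⟩

lemma pt_restrict {S P : Finset EPt} (hS : S ⊆ P) :
    P.filter (fun x => ({x} : Finset EPt) ⊆ S) = S := by
  ext x
  simp only [Finset.mem_filter, Finset.singleton_subset_iff]
  exact ⟨fun h => h.2, fun h => ⟨hS h, h⟩⟩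

end CharAux

theorem charalambides_probabilistic (n Q₁ Q₂ : ℕ)
    (P : Finset (EuclideanSpace ℝ (Fin 2))) (hP : P.card = n)
    (hQ1 : ((P ×ˢ P ×ˢ P ×ˢ P).filter fun t =>
        t.1 ≠ t.2.1 ∧ t.1 ≠ t.2.2.1 ∧ t.1 ≠ t.2.2.2 ∧ t.2.1 ≠ t.2.2.1 ∧
        t.2.1 ≠ t.2.2.2 ∧ t.2.2.1 ≠ t.2.2.2 ∧
        dist t.1 t.2.1 = dist t.2.2.1 t.2.2.2 ∧ 0 < dist t.1 t.2.1).card ≤ Q₁)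
    (hQ2 : ((P ×ˢ P ×ˢ P).filter fun t =>
        t.1 ≠ t.2.1 ∧ t.1 ≠ t.2.2 ∧ t.2.1 ≠ t.2.2 ∧
        dist t.1 t.2.1 = dist t.1 t.2.2).card ≤ Q₂) :
    ∀ p : ℝ, 0 < p → p < 1 →
      ∃ P'' ⊆ P,
        (∀ a ∈ P'', ∀ b ∈ P'', ∀ c ∈ P'', ∀ e ∈ P'', a ≠ b → c ≠ e →
          dist a b = dist c e →
          ({a, b} : Finset (EuclideanSpace ℝ (Fin 2))) = {c, e}) ∧
        p * n - p ^ 4 * Q₁ - p ^ 3 * Q₂ ≤ (P''.card : ℝ) := by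
  intro p hp0 hp1
  have hQ1' : (quadF P).card ≤ Q₁ := hQ1
  have hQ2' : (triF P).card ≤ Q₂ := hQ2
  set W : Finset EPt → ℝ :=
    fun S => p ^ S.card * (1 - p) ^ (P.card - S.card) with hW
  -- expectation of |S|
  have E0 : ∑ S ∈ P.powerset, W S * (S.card : ℝ) = p * P.card := by
    have := exp_count p P P (fun x => ({x} : Finset EPt))
      (fun x hx => Finset.singleton_subset_iff.mpr hx)
    simp only [Finset.card_singleton, pow_one, Finset.sum_const, nsmul_eq_mul] at this
    rw [mul_comm p (P.card : ℝ), ← this]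
    refine Finset.sum_congr rfl fun S hS => ?_
    rw [pt_restrict (Finset.mem_powerset.mp hS)]
  -- expectation of the number of bad quadruples
  have E1 : ∑ S ∈ P.powerset, W S * ((quadF S).card : ℝ)
      = p ^ 4 * ((quadF P).card : ℝ) := by
    have hgsub : ∀ u ∈ quadF P,
        ({u.1, u.2.1, u.2.2.1, u.2.2.2} : Finset EPt) ⊆ P := by
      intro u hu
      have h := (mem_quadF.mp hu).1
      simp only [Finset.insert_subset_iff, Finset.singleton_subset_iff]
      exact ⟨h.1, h.2.1, h.2.2.1, h.2.2.2⟩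
    have hcard : ∀ u ∈ quadF P,
        ({u.1, u.2.1, u.2.2.1, u.2.2.2} : Finset EPt).card = 4 := by
      intro u hu
      have h := (mem_quadF.mp hu).2
      rw [Finset.card_insert_of_notMem, Finset.card_insert_of_notMem,
        Finset.card_insert_of_notMem, Finset.card_singleton]
      · simp only [Finset.mem_singleton]; exact h.2.2.2.2.2.1
      · simp only [Finset.mem_insert, Finset.mem_singleton]
        push_neg
        exact ⟨h.2.2.2.1, h.2.2.2.2.1⟩
      · simp only [Finset.mem_insert, Finset.mem_singleton]
        push_neg
        exact ⟨h.1, h.2.1, h.2.2.1⟩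
    calc ∑ S ∈ P.powerset, W S * ((quadF S).card : ℝ)
        = ∑ S ∈ P.powerset, (p ^ S.card * (1 - p) ^ (P.card - S.card)) *
            (((quadF P).filter fun u =>
              ({u.1, u.2.1, u.2.2.1, u.2.2.2} : Finset EPt) ⊆ S).card : ℝ) := by
          refine Finset.sum_congr rfl fun S hS => ?_
          rw [quad_restrict (Finset.mem_powerset.mp hS)]
      _ = ∑ u ∈ quadF P, p ^ (({u.1, u.2.1, u.2.2.1, u.2.2.2} : Finset EPt)).card :=
          exp_count p P (quadF P) _ hgsub
      _ = ∑ _u ∈ quadF P, p ^ 4 := Finset.sum_congr rfl fun u hu => by rw [hcard u hu]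
      _ = p ^ 4 * ((quadF P).card : ℝ) := by
          rw [Finset.sum_const, nsmul_eq_mul, mul_comm]
  -- expectation of the number of bad triples
  have E2 : ∑ S ∈ P.powerset, W S * ((triF S).card : ℝ)
      = p ^ 3 * ((triF P).card : ℝ) := by
    have hgsub : ∀ u ∈ triF P,
        ({u.1, u.2.1, u.2.2} : Finset EPt) ⊆ P := by
      intro u hu
      have h := (mem_triF.mp hu).1
      simp only [Finset.insert_subset_iff, Finset.singleton_subset_iff]
      exact ⟨h.1, h.2.1, h.2.2⟩
    have hcard : ∀ u ∈ triF P,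
        ({u.1, u.2.1, u.2.2} : Finset EPt).card = 3 := by
      intro u hu
      have h := (mem_triF.mp hu).2
      rw [Finset.card_insert_of_notMem, Finset.card_insert_of_notMem,
        Finset.card_singleton]
      · simp only [Finset.mem_singleton]; exact h.2.2.1
      · simp only [Finset.mem_insert, Finset.mem_singleton]
        push_neg
        exact ⟨h.1, h.2.1⟩
    calc ∑ S ∈ P.powerset, W S * ((triF S).card : ℝ)
        = ∑ S ∈ P.powerset, (p ^ S.card * (1 - p) ^ (P.card - S.card)) *
            (((triF P).filter fun u =>
              ({u.1, u.2.1, u.2.2} : Finset EPt) ⊆ S).card : ℝ) := by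
          refine Finset.sum_congr rfl fun S hS => ?_
          rw [tri_restrict (Finset.mem_powerset.mp hS)]
      _ = ∑ u ∈ triF P, p ^ (({u.1, u.2.1, u.2.2} : Finset EPt)).card :=
          exp_count p P (triF P) _ hgsub
      _ = ∑ _u ∈ triF P, p ^ 3 := Finset.sum_congr rfl fun u hu => by rw [hcard u hu]
      _ = p ^ 3 * ((triF P).card : ℝ) := by
          rw [Finset.sum_const, nsmul_eq_mul, mul_comm]
  -- total expectation
  have Etot : ∑ S ∈ P.powerset,
      W S * ((S.card : ℝ) - ((quadF S).card : ℝ) - ((triF S).card : ℝ))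
      = p * P.card - p ^ 4 * ((quadF P).card : ℝ) - p ^ 3 * ((triF P).card : ℝ) := by
    rw [← E0, ← E1, ← E2, ← Finset.sum_sub_distrib, ← Finset.sum_sub_distrib]
    refine Finset.sum_congr rfl fun S _ => ?_
    ring
  have hbound : p * n - p ^ 4 * Q₁ - p ^ 3 * Q₂
      ≤ ∑ S ∈ P.powerset,
        W S * ((S.card : ℝ) - ((quadF S).card : ℝ) - ((triF S).card : ℝ)) := by
    rw [Etot, hP]
    have h1 : p ^ 4 * ((quadF P).card : ℝ) ≤ p ^ 4 * (Q₁ : ℝ) := by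
      apply mul_le_mul_of_nonneg_left _ (by positivity)
      exact_mod_cast hQ1'
    have h2 : p ^ 3 * ((triF P).card : ℝ) ≤ p ^ 3 * (Q₂ : ℝ) := by
      apply mul_le_mul_of_nonneg_left _ (by positivity)
      exact_mod_cast hQ2'
    linarith
  -- averaging: some S achieves the bound
  have hex : ∃ S ∈ P.powerset, p * n - p ^ 4 * Q₁ - p ^ 3 * Q₂
      ≤ (S.card : ℝ) - ((quadF S).card : ℝ) - ((triF S).card : ℝ) := by
    by_contra hcon
    push_neg at hcon
    have hlt : ∑ S ∈ P.powerset,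
        W S * ((S.card : ℝ) - ((quadF S).card : ℝ) - ((triF S).card : ℝ))
        < ∑ S ∈ P.powerset, W S * (p * n - p ^ 4 * Q₁ - p ^ 3 * Q₂) := by
      refine Finset.sum_lt_sum_of_nonempty ⟨∅, by simp⟩ fun S hS => ?_
      have hWpos : 0 < W S := by
        have h1p : (0:ℝ) < 1 - p := by linarith
        positivity
      exact (mul_lt_mul_iff_right₀ hWpos).mpr (hcon S hS)
    rw [← Finset.sum_mul, sumw, one_mul] at hlt
    linarith
  obtain ⟨S, hSmem, hSle⟩ := hex
  obtain ⟨T, hT1, hT2, hT3⟩ := deletion S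
  refine ⟨T, hT1.trans (Finset.mem_powerset.mp hSmem), hT2, ?_⟩
  have hcast : (S.card : ℝ) ≤ (T.card : ℝ) + ((quadF S).card : ℝ) + ((triF S).card : ℝ) := by
    exact_mod_cast hT3
  linarith
end

section
/- Let k ≥ 3 and let P be a finite set of n points in ℝ² (n ≥ k) such that every k-element subset of P determines at least C(k,2) − k + 3 distinct distances. Then for every p ∈ P, no circle centered at p contains k − 1 or more points of P \ {p}; consequently, every point p ∈ P determines at least (n−1)/(k−2) distinct distances to the other points of P. -/
open scoped Classical

lemma dist_image_card_le (S : Finset (EuclideanSpace ℝ (Fin 2))) :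
    ((S.offDiag).image fun pq => dist pq.1 pq.2).card ≤ S.card.choose 2 := by
  classical
  rw [← Finset.card_powersetCard 2 S]
  have : ∀ d ∈ (S.offDiag).image fun pq => dist pq.1 pq.2,
      ∃ t ∈ S.powersetCard 2, ∃ a b : EuclideanSpace ℝ (Fin 2),
        t = {a, b} ∧ dist a b = d := by
    intro d hd
    obtain ⟨pq, hpq, hdist⟩ := Finset.mem_image.mp hd
    obtain ⟨h1, h2, hne⟩ := Finset.mem_offDiag.mp hpq
    refine ⟨{pq.1, pq.2}, ?_, pq.1, pq.2, rfl, hdist⟩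
    rw [Finset.mem_powersetCard]
    constructor
    · intro x hx
      rcases Finset.mem_insert.mp hx with h | h
      · exact h ▸ h1
      · exact (Finset.mem_singleton.mp h) ▸ h2
    · rw [Finset.card_insert_of_notMem (by simpa using hne), Finset.card_singleton]
  choose f hf ha using this
  apply Finset.card_le_card_of_injOn (fun d => if h : _ then f d h else ∅)
  · intro d hd
    simp only [dif_pos hd]
    have hd' : d ∈ (S.offDiag).image (fun pq => dist pq.1 pq.2) := Finset.mem_coe.mp hd
    rw [Finset.mem_coe, dif_pos hd']
    exact hf d hd'
  · intro d hd d' hd' heq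
    simp only [Finset.mem_coe] at hd hd'
    simp only [dif_pos hd, dif_pos hd'] at heq
    obtain ⟨a, b, hab, hd1⟩ := ha d hd
    obtain ⟨a', b', hab', hd2⟩ := ha d' hd'
    rw [hab, hab'] at heq
    have h : ({a, b} : Finset _) = {a', b'} := heq
    have h1 : a = a' ∨ a = b' := by
      have : a ∈ ({a', b'} : Finset _) := h ▸ (by simp)
      simpa using this
    have h2 : b = a' ∨ b = b' := by
      have : b ∈ ({a', b'} : Finset _) := h ▸ (by simp)
      simpa using this
    have h3 : a' = a ∨ a' = b := by
      have : a' ∈ ({a, b} : Finset _) := h.symm ▸ (by simp)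
      simpa using this
    have h4 : b' = a ∨ b' = b := by
      have : b' ∈ ({a, b} : Finset _) := h.symm ▸ (by simp)
      simpa using this
    rw [← hd1, ← hd2]
    rcases h1 with h1 | h1 <;> rcases h2 with h2 | h2
    · have hb' : b' = a' := by
        rcases h4 with h4 | h4
        · rw [h4, h1]
        · rw [h4, h2]
      rw [h1, h2, hb']
    · rw [h1, h2]
    · rw [h1, h2, dist_comm]
    · have ha2 : a' = b' := by
        rcases h3 with h3 | h3
        · rw [h3, h1]
        · rw [h3, h2]
      rw [h1, h2, ha2]

theorem local_to_global_k (k n : ℕ) (hk : 3 ≤ k) (hn : k ≤ n)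
    (P : Finset (EuclideanSpace ℝ (Fin 2))) (hP : P.card = n)
    (hloc : ∀ S ⊆ P, S.card = k →
      k.choose 2 - k + 3 ≤ ((S.offDiag).image fun pq => dist pq.1 pq.2).card) :
    (∀ p ∈ P, ∀ r : ℝ,
      ((P.erase p).filter fun q => dist p q = r).card ≤ k - 2) ∧
    (∀ p ∈ P, ((n : ℝ) - 1) / ((k : ℝ) - 2) ≤
      (((P.erase p).image (fun q => dist p q)).card : ℝ)) := by
  classical
  have part1 : ∀ p ∈ P, ∀ r : ℝ,
      ((P.erase p).filter fun q => dist p q = r).card ≤ k - 2 := by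
    intro p hp r
    by_contra hcon
    push_neg at hcon
    have hge : k - 1 ≤ ((P.erase p).filter fun q => dist p q = r).card := by omega
    obtain ⟨T, hTsub, hTcard⟩ := Finset.exists_subset_card_eq hge
    have hTerase : T ⊆ P.erase p := hTsub.trans (Finset.filter_subset _ _)
    have hpT : p ∉ T := fun h => (Finset.mem_erase.mp (hTerase h)).1 rfl
    set S := insert p T with hS
    have hScard : S.card = k := by
      rw [hS, Finset.card_insert_of_notMem hpT, hTcard]; omega
    have hSsub : S ⊆ P := by
      intro x hx
      rcases Finset.mem_insert.mp hx with h | h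
      · exact h ▸ hp
      · exact Finset.mem_of_mem_erase (hTerase h)
    have hbound : ((S.offDiag).image fun pq => dist pq.1 pq.2).card ≤
        1 + (k - 1).choose 2 := by
      have hsub : ((S.offDiag).image fun pq => dist pq.1 pq.2) ⊆
          insert r ((T.offDiag).image fun pq => dist pq.1 pq.2) := by
        intro d hd
        obtain ⟨pq, hpq, hdist⟩ := Finset.mem_image.mp hd
        obtain ⟨h1, h2, hne⟩ := Finset.mem_offDiag.mp hpq
        rcases Finset.mem_insert.mp h1 with ha | ha
        · -- pq.1 = p, so pq.2 ∈ T
          have hb : pq.2 ∈ T := by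
            rcases Finset.mem_insert.mp h2 with hb | hb
            · exact absurd (ha.trans hb.symm) hne
            · exact hb
          have := (Finset.mem_filter.mp (hTsub hb)).2
          exact Finset.mem_insert.mpr (Or.inl (by rw [← hdist, ha]; exact this))
        · rcases Finset.mem_insert.mp h2 with hb | hb
          · have := (Finset.mem_filter.mp (hTsub ha)).2
            refine Finset.mem_insert.mpr (Or.inl ?_)
            rw [← hdist, hb, dist_comm]; exact this
          · refine Finset.mem_insert.mpr (Or.inr ?_)
            exact Finset.mem_image.mpr ⟨pq, Finset.mem_offDiag.mpr ⟨ha, hb, hne⟩, hdist⟩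
      calc ((S.offDiag).image fun pq => dist pq.1 pq.2).card
          ≤ (insert r ((T.offDiag).image fun pq => dist pq.1 pq.2)).card :=
            Finset.card_le_card hsub
        _ ≤ 1 + ((T.offDiag).image fun pq => dist pq.1 pq.2).card :=
            by rw [Nat.add_comm]; exact Finset.card_insert_le _ _
        _ ≤ 1 + (k - 1).choose 2 := by
            have := dist_image_card_le T
            rw [hTcard] at this; omega
    have hloc' := hloc S hSsub hScard
    have hpascal : k.choose 2 = (k - 1).choose 1 + (k - 1).choose 2 := by
      have hk1 : k = (k - 1) + 1 := by omega
      rw [hk1]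
      exact Nat.choose_succ_succ (k - 1) 1
    have hc1 : (k - 1).choose 1 = k - 1 := Nat.choose_one_right _
    have hpos : 0 < (k - 1).choose 2 := Nat.choose_pos (by omega)
    omega
  refine ⟨part1, ?_⟩
  intro p hp
  have hcard : (P.erase p).card = n - 1 := by
    rw [Finset.card_erase_of_mem hp, hP]
  have hkey : (P.erase p).card ≤ (k - 2) *
      ((P.erase p).image fun q => dist p q).card := by
    apply Finset.card_le_mul_card_image
    intro a _
    exact part1 p hp a
  rw [hcard] at hkey
  have hk2 : (0 : ℝ) < (k : ℝ) - 2 := by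
    have : (3 : ℝ) ≤ (k : ℝ) := by exact_mod_cast hk
    linarith
  rw [div_le_iff₀ hk2]
  have hcast : ((n - 1 : ℕ) : ℝ) ≤ ((k - 2 : ℕ) : ℝ) *
      (((P.erase p).image fun q => dist p q).card : ℝ) := by
    exact_mod_cast hkey
  have h1 : ((n - 1 : ℕ) : ℝ) = (n : ℝ) - 1 := by
    have : 1 ≤ n := by omega
    push_cast [this]; ring
  have h2 : ((k - 2 : ℕ) : ℝ) = (k : ℝ) - 2 := by
    have : 2 ≤ k := by omega
    push_cast [this]; ring
  rw [h1, h2] at hcast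
  linarith
end

section
/- Let k ≥ 4 and let P be a finite set of n points in ℝ² such that every k-element subset determines at least C(k,2) − ⌊k/2⌋ + 2 distinct distances. Then every nonzero distance is spanned by at most ⌊k/2⌋ − 1 pairs of points of P, and hence P determines at least C(n,2)/(⌊k/2⌋ − 1) = Ω(n²) distinct distances. -/
open scoped Classical

open Finset

theorem local_to_global_quadratic (k : ℕ) (hk : 4 ≤ k)
    (P : Finset (EuclideanSpace ℝ (Fin 2))) (hkn : k ≤ P.card)
    (hloc : ∀ S ⊆ P, S.card = k →
      k.choose 2 - k / 2 + 2 ≤ ((S.offDiag).image fun pq => dist pq.1 pq.2).card) :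
    (∀ t : ℝ, 0 < t →
      ((P.powersetCard 2).filter fun s =>
        ∀ a ∈ s, ∀ b ∈ s, a ≠ b → dist a b = t).card ≤ k / 2 - 1) ∧
    ((P.card.choose 2 : ℝ) / ((k / 2 : ℕ) - 1 : ℝ) ≤
      (((P.offDiag).image fun pq => dist pq.1 pq.2).card : ℝ)) := by
  set m := k / 2 with hm
  have hm2 : 2 ≤ m := by omega
  -- key facts for arithmetic
  have hchoose : 2 * k.choose 2 = k * k - k := by
    have hev : 2 ∣ k * (k - 1) := by
      rcases Nat.even_or_odd k with h | h
      · exact Dvd.dvd.mul_right h.two_dvd _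
      · obtain ⟨j, hj⟩ := h
        exact Dvd.dvd.mul_left (⟨j, by omega⟩ : 2 ∣ k - 1) _
    have := Nat.choose_two_right k
    have h2 : k * (k - 1) = k * k - k := by
      cases k with
      | zero => simp
      | succ n => simp [Nat.succ_sub_one, Nat.mul_succ]
    rw [this, h2.symm, Nat.mul_div_cancel' hev, h2]
  have part1 : ∀ t : ℝ, 0 < t →
      ((P.powersetCard 2).filter fun s =>
        ∀ a ∈ s, ∀ b ∈ s, a ≠ b → dist a b = t).card ≤ m - 1 := by
    intro t ht
    by_contra hcon
    push_neg at hcon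
    have hFm : m ≤ ((P.powersetCard 2).filter fun s =>
        ∀ a ∈ s, ∀ b ∈ s, a ≠ b → dist a b = t).card := by omega
    obtain ⟨T, hTF, hTcard⟩ := Finset.exists_subset_card_eq hFm
    have hTmem : ∀ s ∈ T, s ⊆ P ∧ s.card = 2 ∧
        ∀ a ∈ s, ∀ b ∈ s, a ≠ b → dist a b = t := by
      intro s hs
      have := hTF hs
      simp only [mem_filter, Finset.mem_powersetCard] at this
      exact ⟨this.1.1, this.1.2, this.2⟩
    set U := T.biUnion id with hU
    have hUP : U ⊆ P := by
      intro x hx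
      simp only [hU, mem_biUnion, id] at hx
      obtain ⟨s, hs, hxs⟩ := hx
      exact (hTmem s hs).1 hxs
    have hUcard : U.card ≤ k := by
      calc U.card ≤ ∑ s ∈ T, (id s).card := Finset.card_biUnion_le
        _ = ∑ s ∈ T, 2 := by
            apply Finset.sum_congr rfl
            intro s hs; exact (hTmem s hs).2.1
        _ = 2 * m := by rw [Finset.sum_const, hTcard]; ring
        _ ≤ k := by omega
    obtain ⟨S, hUS, hSP, hScard⟩ :=
      Finset.exists_subsuperset_card_eq hUP hUcard hkn
    set f : (EuclideanSpace ℝ (Fin 2)) × (EuclideanSpace ℝ (Fin 2)) → ℝ :=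
      fun pq => dist pq.1 pq.2 with hf
    set B := S.offDiag.filter (fun pq => f pq = t) with hB
    set A := S.offDiag.filter (fun pq => ¬ f pq = t) with hA
    -- B is large
    have hBsub : T.biUnion (fun s => s.offDiag) ⊆ B := by
      intro pq hpq
      simp only [mem_biUnion] at hpq
      obtain ⟨s, hs, hpqs⟩ := hpq
      rw [Finset.mem_offDiag] at hpqs
      obtain ⟨h1, h2, h3⟩ := hpqs
      have hsub : s ⊆ S := fun x hx => hUS (by
        simp only [hU, mem_biUnion, id]; exact ⟨s, hs, hx⟩)
      simp only [hB, mem_filter, Finset.mem_offDiag]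
      exact ⟨⟨hsub h1, hsub h2, h3⟩, (hTmem s hs).2.2 _ h1 _ h2 h3⟩
    have hBcard : 2 * m ≤ B.card := by
      have hdisj : (T : Set (Finset (EuclideanSpace ℝ (Fin 2)))).PairwiseDisjoint
          (fun s => s.offDiag) := by
        intro s hs s' hs' hne
        simp only [Finset.disjoint_left]
        intro pq hpq hpq'
        rw [Finset.mem_offDiag] at hpq hpq'
        have hcs : s.card = 2 := (hTmem s hs).2.1
        have hcs' : s'.card = 2 := (hTmem s' hs').2.1
        have h1 : ({pq.1, pq.2} : Finset _) ⊆ s := by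
          intro x hx; simp at hx; rcases hx with h | h <;> subst h
          · exact hpq.1
          · exact hpq.2.1
        have h2 : ({pq.1, pq.2} : Finset _) ⊆ s' := by
          intro x hx; simp at hx; rcases hx with h | h <;> subst h
          · exact hpq'.1
          · exact hpq'.2.1
        have hc : ({pq.1, pq.2} : Finset _).card = 2 := by
          rw [Finset.card_insert_of_notMem (by simp [hpq.2.2]), Finset.card_singleton]
        have e1 : ({pq.1, pq.2} : Finset _) = s := Finset.eq_of_subset_of_card_le h1 (by omega)
        have e2 : ({pq.1, pq.2} : Finset _) = s' := Finset.eq_of_subset_of_card_le h2 (by omega)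
        exact hne (e1 ▸ e2)
      calc 2 * m = ∑ s ∈ T, 2 := by rw [Finset.sum_const, hTcard]; ring
        _ = ∑ s ∈ T, s.offDiag.card := by
            apply Finset.sum_congr rfl
            intro s hs
            rw [Finset.offDiag_card, (hTmem s hs).2.1]
        _ = (T.biUnion (fun s => s.offDiag)).card := (Finset.card_biUnion hdisj).symm
        _ ≤ B.card := Finset.card_le_card hBsub
    -- fibers of f on A have size ≥ 2
    have h2fib : 2 * (A.image f).card ≤ A.card := by
      apply Finset.mul_card_image_le_card
      intro b hb
      rw [Finset.mem_image] at hb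
      obtain ⟨pq, hpq, hfpq⟩ := hb
      have hswap : (pq.2, pq.1) ∈ A := by
        simp only [hA, mem_filter, Finset.mem_offDiag] at hpq ⊢
        refine ⟨⟨hpq.1.2.1, hpq.1.1, Ne.symm hpq.1.2.2⟩, ?_⟩
        simp only [hf]
        rw [dist_comm]
        exact hpq.2
      have hsub : ({pq, (pq.2, pq.1)} : Finset _) ⊆ A.filter (fun a => f a = b) := by
        intro x hx
        simp only [Finset.mem_insert, Finset.mem_singleton] at hx
        rcases hx with h | h <;> subst h
        · exact Finset.mem_filter.2 ⟨hpq, hfpq⟩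
        · refine Finset.mem_filter.2 ⟨hswap, ?_⟩
          simp only [hf] at hfpq ⊢
          rw [dist_comm]; exact hfpq
      have hne : pq ≠ (pq.2, pq.1) := by
        intro h
        simp only [hA, mem_filter, Finset.mem_offDiag] at hpq
        exact hpq.1.2.2 (Prod.ext_iff.mp h).1
      calc 2 = ({pq, (pq.2, pq.1)} : Finset _).card := by
            rw [Finset.card_insert_of_notMem (by simp [hne]), Finset.card_singleton]
        _ ≤ _ := Finset.card_le_card hsub
    have hAB : A.card + B.card = S.offDiag.card := by
      rw [hA, hB]
      rw [add_comm]
      exact Finset.card_filter_add_card_filter_not _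
    have hoff : S.offDiag.card = k * k - k := by rw [Finset.offDiag_card, hScard]
    have himg : (S.offDiag.image f) ⊆ insert t (A.image f) := by
      intro x hx
      rw [Finset.mem_image] at hx
      obtain ⟨pq, hpq, hfpq⟩ := hx
      by_cases hcase : f pq = t
      · rw [Finset.mem_insert]; left; rw [← hfpq, hcase]
      · rw [Finset.mem_insert]; right
        exact Finset.mem_image.2 ⟨pq, Finset.mem_filter.2 ⟨hpq, hcase⟩, hfpq⟩
    have hloc' := hloc S hSP hScard
    have himgcard : (S.offDiag.image f).card ≤ 1 + (A.image f).card := by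
      calc (S.offDiag.image f).card ≤ (insert t (A.image f)).card := Finset.card_le_card himg
        _ ≤ 1 + (A.image f).card := by rw [add_comm]; exact Finset.card_insert_le _ _
    have hKk : 4 * k ≤ k * k := by nlinarith
    omega
  refine ⟨part1, ?_⟩
  -- Part 2
  set f : (EuclideanSpace ℝ (Fin 2)) × (EuclideanSpace ℝ (Fin 2)) → ℝ :=
    fun pq => dist pq.1 pq.2 with hf
  have hfiber : ∀ b ∈ P.offDiag.image f,
      (P.offDiag.filter (fun pq => f pq = b)).card ≤ 2 * (m - 1) := by
    intro b hb
    rw [Finset.mem_image] at hb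
    obtain ⟨pq₀, hpq₀, hfpq₀⟩ := hb
    rw [Finset.mem_offDiag] at hpq₀
    have hbpos : 0 < b := by
      rw [← hfpq₀]
      simp only [hf]
      exact dist_pos.2 hpq₀.2.2
    set Fb := ((P.powersetCard 2).filter fun s =>
        ∀ a ∈ s, ∀ b' ∈ s, a ≠ b' → dist a b' = b) with hFb
    have hFbcard : Fb.card ≤ m - 1 := part1 b hbpos
    set g : (EuclideanSpace ℝ (Fin 2)) × (EuclideanSpace ℝ (Fin 2)) →
        Finset (EuclideanSpace ℝ (Fin 2)) := fun pq => {pq.1, pq.2} with hg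
    have hmaps : ∀ pq ∈ P.offDiag.filter (fun pq => f pq = b), g pq ∈ Fb := by
      intro pq hpq
      rw [Finset.mem_filter, Finset.mem_offDiag] at hpq
      obtain ⟨⟨h1, h2, h3⟩, h4⟩ := hpq
      simp only [hFb, mem_filter, Finset.mem_powersetCard]
      refine ⟨⟨?_, ?_⟩, ?_⟩
      · intro x hx; simp only [hg, Finset.mem_insert, Finset.mem_singleton] at hx
        rcases hx with h | h <;> subst h
        · exact h1
        · exact h2
      · simp only [hg]
        rw [Finset.card_insert_of_notMem (by simp [h3]), Finset.card_singleton]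
      · intro x hx y hy hxy
        simp only [hg, Finset.mem_insert, Finset.mem_singleton] at hx hy
        rcases hx with h | h <;> rcases hy with h' | h' <;> subst h <;> subst h'
        · exact absurd rfl hxy
        · exact h4
        · rw [dist_comm]; exact h4
        · exact absurd rfl hxy
    have hgfib : ∀ s ∈ Fb,
        ((P.offDiag.filter (fun pq => f pq = b)).filter (fun pq => g pq = s)).card ≤ 2 := by
      intro s hs
      by_cases hne : ((P.offDiag.filter (fun pq => f pq = b)).filter
          (fun pq => g pq = s)).Nonempty
      · obtain ⟨pq, hpq⟩ := hne
        rw [Finset.mem_filter] at hpq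
        obtain ⟨hpq1, hpq2⟩ := hpq
        have hsub : (P.offDiag.filter (fun pq => f pq = b)).filter (fun pq => g pq = s)
            ⊆ {pq, (pq.2, pq.1)} := by
          intro xy hxy
          rw [Finset.mem_filter] at hxy
          obtain ⟨hxy1, hxy2⟩ := hxy
          rw [Finset.mem_filter, Finset.mem_offDiag] at hxy1 hpq1
          have hxyne := hxy1.1.2.2
          have hpqne := hpq1.1.2.2
          have heq : ({xy.1, xy.2} : Finset _) = {pq.1, pq.2} := by
            have h' : g xy = g pq := hxy2.trans hpq2.symm
            simpa [hg] using h'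
          have hx1 : xy.1 ∈ ({pq.1, pq.2} : Finset _) := by
            rw [← heq]; simp
          have hx2 : xy.2 ∈ ({pq.1, pq.2} : Finset _) := by
            rw [← heq]; simp
          simp only [Finset.mem_insert, Finset.mem_singleton] at hx1 hx2
          simp only [Finset.mem_insert, Finset.mem_singleton]
          rcases hx1 with h1 | h1 <;> rcases hx2 with h2 | h2
          · exact absurd (h1.trans h2.symm) hxyne
          · left; exact Prod.ext h1 h2
          · right; exact Prod.ext h1 h2
          · exact absurd (h1.trans h2.symm) hxyne
        calc _ ≤ ({pq, (pq.2, pq.1)} : Finset _).card := Finset.card_le_card hsub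
          _ ≤ 2 := by
              apply le_trans (Finset.card_insert_le _ _)
              simp
      · rw [Finset.not_nonempty_iff_eq_empty] at hne
        rw [hne]; simp
    have := Finset.card_le_mul_card_image_of_maps_to hmaps 2 hgfib
    calc (P.offDiag.filter (fun pq => f pq = b)).card ≤ 2 * Fb.card := this
      _ ≤ 2 * (m - 1) := by omega
  have hcount : P.offDiag.card ≤ 2 * (m - 1) * (P.offDiag.image f).card := by
    have := Finset.card_le_mul_card_image (f := f) P.offDiag (2 * (m - 1)) hfiber
    linarith [this]
  have hoffP : P.offDiag.card = P.card * P.card - P.card := by rw [Finset.offDiag_card]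
  have hchooseP : 2 * P.card.choose 2 = P.card * P.card - P.card := by
    have hev : 2 ∣ P.card * (P.card - 1) := by
      rcases Nat.even_or_odd P.card with h | h
      · exact Dvd.dvd.mul_right h.two_dvd _
      · obtain ⟨j, hj⟩ := h
        exact Dvd.dvd.mul_left (⟨j, by omega⟩ : 2 ∣ P.card - 1) _
    have h1 := Nat.choose_two_right P.card
    have h2 : P.card * (P.card - 1) = P.card * P.card - P.card := by
      cases h : P.card with
      | zero => simp
      | succ n => simp [Nat.succ_sub_one, Nat.mul_succ]
    rw [h1, h2.symm, Nat.mul_div_cancel' hev, h2]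
  -- conclude in ℝ
  have hmpos : (0 : ℝ) < (m : ℝ) - 1 := by
    have : (2 : ℝ) ≤ (m : ℝ) := by exact_mod_cast hm2
    linarith
  rw [div_le_iff₀ hmpos]
  have hrel : 2 * (m - 1) * (P.offDiag.image f).card
      = 2 * ((m - 1) * (P.offDiag.image f).card) := by ring
  have key : P.card.choose 2 ≤ (m - 1) * (P.offDiag.image f).card := by omega
  have keyR : (P.card.choose 2 : ℝ) ≤ ((m - 1 : ℕ) : ℝ) * ((P.offDiag.image f).card : ℝ) := by
    exact_mod_cast key
  have hcast : ((m - 1 : ℕ) : ℝ) = (m : ℝ) - 1 := by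
    rw [Nat.cast_sub (by omega)]; simp
  rw [hcast] at keyR
  calc (P.card.choose 2 : ℝ) ≤ ((P.offDiag.image f).card : ℝ) * ((m : ℝ) - 1) := by
        linarith
    _ = _ := by norm_num
end
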